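/- Under the virtual-queue update rule, for every iteration t ≥ 1 one has ‖Q(t)‖² ≥ ‖g(x(t−1))‖², where g(x) = (g_1(x),…,g_m(x)) and ‖·‖ is the Euclidean norm on ℝ^m. -/

import Mathlib

/-- The stacked constraint vector `g(x) = (g_1(x), …, g_m(x))` as an element of
Euclidean space `ℝ^m`. -/
noncomputable def gvec {n m : ℕ} (g : Fin m → EuclideanSpace ℝ (Fin n) → ℝ)
    (x : EuclideanSpace ℝ (Fin n)) : EuclideanSpace ℝ (Fin m) :=
  WithLp.toLp 2 (fun k => g k x)

/-- Virtual queue property for `t ≥ 1`.  Indexing convention: `x 0` denotes `x(−1)`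
and `x (t+1)` denotes the iterate `x(t)`, so `Q 0 k = max {0, −g_k(x(−1))}` and
`Q (t+1) k = max {−g_k(x(t)), Q t k + g_k(x(t))}`.  Then for all `t ≥ 1`,
`‖Q(t)‖² ≥ ‖g(x(t−1))‖²`; in the shifted indexing `x(t−1)` is `x t`. -/
theorem virtual_queue_norm_ge {n m : ℕ}
    (X : Set (EuclideanSpace ℝ (Fin n)))
    (g : Fin m → EuclideanSpace ℝ (Fin n) → ℝ)
    (x : ℕ → EuclideanSpace ℝ (Fin n)) (hx : ∀ t, x t ∈ X)
    (Q : ℕ → EuclideanSpace ℝ (Fin m))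
    (hQ0 : ∀ k, Q 0 k = max 0 (-(g k (x 0))))
    (hQr : ∀ (t : ℕ) (k : Fin m),
      Q (t + 1) k = max (-(g k (x (t + 1)))) (Q t k + g k (x (t + 1)))) :
    ∀ t : ℕ, 1 ≤ t → ‖gvec g (x t)‖ ^ 2 ≤ ‖Q t‖ ^ 2 := by
  have hnonneg : ∀ t k, 0 ≤ Q t k := by
    intro t
    induction t with
    | zero => intro k; rw [hQ0]; exact le_max_left _ _
    | succ t ih =>
      intro k
      rw [hQr]
      rcases le_or_gt (g k (x (t + 1))) 0 with h | h
      · exact le_trans (by linarith) (le_max_left _ _)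
      · exact le_trans (by have := ih k; linarith) (le_max_right _ _)
  intro t ht
  obtain ⟨s, rfl⟩ := Nat.exists_eq_add_of_le ht
  set u := 1 + s with hu
  have hpt : ∀ k, |g k (x u)| ≤ |Q u k| := by
    intro k
    have hq := hQr s k
    have hu' : s + 1 = u := by omega
    rw [hu'] at hq
    rcases le_or_gt (g k (x u)) 0 with h | h
    · rw [abs_of_nonpos h, abs_of_nonneg (hnonneg u k), hq]
      exact le_max_left _ _
    · rw [abs_of_pos h, abs_of_nonneg (hnonneg u k), hq]
      exact le_trans (by have := hnonneg s k; linarith) (le_max_right _ _)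
  have h1 : ‖gvec g (x u)‖ ^ 2 = ∑ k, (g k (x u)) ^ 2 := by
    rw [EuclideanSpace.norm_eq, Real.sq_sqrt (Finset.sum_nonneg fun k _ => sq_nonneg _)]
    simp [gvec, sq_abs]
  have h2 : ‖Q u‖ ^ 2 = ∑ k, (Q u k) ^ 2 := by
    rw [EuclideanSpace.norm_eq, Real.sq_sqrt (Finset.sum_nonneg fun k _ => sq_nonneg _)]
    simp [sq_abs]
  rw [h1, h2]
  refine Finset.sum_le_sum fun k _ => ?_
  rw [← sq_abs (g k (x u)), ← sq_abs (Q u k)]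
  exact pow_le_pow_left₀ (abs_nonneg _) (hpt k) 2
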